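/- Under the SAEF-SGD-with-momentum dynamics with learning rates 0 < η_t ≤ η_max, for every β₁ with 0 < β₁ < δ/(1−δ) and every t ≥ 0: E‖Δ^k_{t+1}‖² ≤ [(1 + 1/β₁)/(1 − (1−δ)(1+β₁))] · η_max²(M² + σ²)/(1−μ)². -/

import Mathlib

open MeasureTheory

/-- Young-type inequality for squared norms. -/
lemma saef_young_sq {E : Type*} [SeminormedAddCommGroup E] (a b : E) {β : ℝ} (hβ : 0 < β) :
    ‖a + b‖ ^ 2 ≤ (1 + β) * ‖a‖ ^ 2 + (1 + 1 / β) * ‖b‖ ^ 2 := by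
  have h : ‖a + b‖ ^ 2 ≤ (‖a‖ + ‖b‖) ^ 2 :=
    pow_le_pow_left₀ (norm_nonneg _) (norm_add_le a b) 2
  have hid : β * ((1 + β) * ‖a‖ ^ 2 + (1 + 1 / β) * ‖b‖ ^ 2 - (‖a‖ + ‖b‖) ^ 2)
      = (β * ‖a‖ - ‖b‖) ^ 2 := by
    field_simp; ring
  nlinarith [sq_nonneg (β * ‖a‖ - ‖b‖), hβ]

/-- Weighted Young inequality used for the momentum recursion. -/
lemma saef_mu_sq (μ x y : ℝ) (hμ0 : 0 ≤ μ) (hμ1 : μ < 1) :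
    (μ * x + y) ^ 2 ≤ μ * x ^ 2 + y ^ 2 / (1 - μ) := by
  have h1 : 0 < 1 - μ := by linarith
  have hid : (1 - μ) * (μ * x ^ 2 + y ^ 2 / (1 - μ) - (μ * x + y) ^ 2)
      = μ * ((1 - μ) * x - y) ^ 2 := by field_simp; ring
  nlinarith [mul_nonneg hμ0 (sq_nonneg ((1 - μ) * x - y)), h1]

/-- Bound on the local update `Δ^k_{t+1} = e^k_t + η_t m^k_{t+1}` of SAEF-SGD with
momentum: for every `β₁ ∈ (0, δ/(1−δ))` and every `t`,
`E‖Δ^k_{t+1}‖² ≤ [(1+1/β₁)/(1−(1−δ)(1+β₁))]·η_max²(M²+σ²)/(1−μ)²`. -/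
theorem local_update_second_moment_bound
    {Ω : Type*} [MeasurableSpace Ω] (P : Measure Ω) [IsProbabilityMeasure P]
    {d K : ℕ} (hK : 1 ≤ K)
    (μ M σ δ ηmax : ℝ) (hμ0 : 0 ≤ μ) (hμ1 : μ < 1)
    (hM : 0 ≤ M) (hσ : 0 ≤ σ) (hδ0 : 0 < δ) (hδ1 : δ < 1)
    (Co : EuclideanSpace ℝ (Fin d) → EuclideanSpace ℝ (Fin d))
    (hCo : ∀ v, ‖Co v - v‖ ^ 2 ≤ (1 - δ) * ‖v‖ ^ 2)
    (η : ℕ → ℝ) (hη0 : ∀ t, 0 < η t) (hηmax : ∀ t, η t ≤ ηmax)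
    (g m e : Fin K → ℕ → Ω → EuclideanSpace ℝ (Fin d))
    (hgL2 : ∀ k t, MemLp (g k t) 2 P)
    (hgbound : ∀ k t, ∫ ω, ‖g k t ω‖ ^ 2 ∂P ≤ M ^ 2 + σ ^ 2)
    (hm0 : ∀ k ω, m k 0 ω = 0) (he0 : ∀ k ω, e k 0 ω = 0)
    (hm : ∀ k t ω, m k (t + 1) ω = μ • m k t ω + g k t ω)
    (Δ : Fin K → ℕ → Ω → EuclideanSpace ℝ (Fin d))
    (hΔ : ∀ k t ω, Δ k (t + 1) ω = e k t ω + η t • m k (t + 1) ω)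
    (he : ∀ k t ω, e k (t + 1) ω = Δ k (t + 1) ω - Co (Δ k (t + 1) ω)) :
    ∀ β₁ : ℝ, 0 < β₁ → β₁ < δ / (1 - δ) → ∀ k t,
      ∫ ω, ‖Δ k (t + 1) ω‖ ^ 2 ∂P
        ≤ ((1 + 1 / β₁) / (1 - (1 - δ) * (1 + β₁)))
            * (ηmax ^ 2 * (M ^ 2 + σ ^ 2) / (1 - μ) ^ 2) := by
  intro β₁ hβ0 hβδ k t
  have h1δ : 0 < 1 - δ := by linarith
  have h1μ : 0 < 1 - μ := by linarith
  obtain ⟨ρ, hρdef⟩ : ∃ ρ : ℝ, ρ = (1 - δ) * (1 + β₁) := ⟨_, rfl⟩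
  obtain ⟨c, hcdef⟩ : ∃ c : ℝ, c = 1 + 1 / β₁ := ⟨_, rfl⟩
  have hβinv : 0 < 1 / β₁ := by positivity
  have hc1 : 1 ≤ c := by rw [hcdef]; linarith
  have hc0 : 0 < c := by linarith
  have hρ0 : 0 < ρ := by rw [hρdef]; positivity
  have hρ1 : ρ < 1 := by
    have h := (lt_div_iff₀ h1δ).mp hβδ
    rw [hρdef]; nlinarith
  have h1ρ : 0 < 1 - ρ := by linarith
  have hηm : 0 < ηmax := lt_of_lt_of_le (hη0 0) (hηmax 0)
  have hMσ : (0:ℝ) ≤ M ^ 2 + σ ^ 2 := by positivity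
  obtain ⟨X, hXdef⟩ : ∃ X : ℝ, X = ηmax ^ 2 * (M ^ 2 + σ ^ 2) / (1 - μ) ^ 2 := ⟨_, rfl⟩
  have hX0 : 0 ≤ X := by rw [hXdef]; positivity
  -- integrability of the squared norms of g
  have hgInt : ∀ s, Integrable (fun ω => ‖g k s ω‖ ^ 2) P := by
    intro s
    have := (hgL2 k s).integrable_norm_rpow (by norm_num) (by norm_num)
    simpa [ENNReal.toReal_ofNat, Real.rpow_natCast] using this
  -- m is in L²
  have hmL2 : ∀ s, MemLp (m k s) 2 P := by
    intro s
    induction s with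
    | zero =>
        have h : m k 0 = fun _ => (0 : EuclideanSpace ℝ (Fin d)) := funext (hm0 k)
        rw [h]; exact memLp_const 0
    | succ s ih =>
        have h : m k (s + 1) = (fun ω => μ • m k s ω + g k s ω) := funext (hm k s)
        rw [h]
        exact (ih.const_smul μ).add (hgL2 k s)
  have hmInt : ∀ s, Integrable (fun ω => ‖m k s ω‖ ^ 2) P := by
    intro s
    have := (hmL2 s).integrable_norm_rpow (by norm_num) (by norm_num)
    simpa [ENNReal.toReal_ofNat, Real.rpow_natCast] using this
  -- pointwise momentum bound
  have hmpt : ∀ s ω, ‖m k (s + 1) ω‖ ^ 2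
      ≤ ∑ i ∈ Finset.range (s + 1), μ ^ (s - i) * ‖g k i ω‖ ^ 2 / (1 - μ) := by
    intro s
    induction s with
    | zero =>
        intro ω
        have h : m k 1 ω = g k 0 ω := by rw [hm k 0 ω, hm0 k ω, smul_zero, zero_add]
        rw [h, Finset.sum_range_one]
        simp only [Nat.sub_zero, pow_zero, one_mul]
        rw [le_div_iff₀ h1μ]
        nlinarith [sq_nonneg (‖g k 0 ω‖)]
    | succ s ih =>
        intro ω
        have hnorm : ‖m k (s + 2) ω‖ ≤ μ * ‖m k (s + 1) ω‖ + ‖g k (s + 1) ω‖ := by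
          rw [hm k (s + 1) ω]
          calc ‖μ • m k (s + 1) ω + g k (s + 1) ω‖
              ≤ ‖μ • m k (s + 1) ω‖ + ‖g k (s + 1) ω‖ := norm_add_le _ _
            _ = μ * ‖m k (s + 1) ω‖ + ‖g k (s + 1) ω‖ := by
                rw [norm_smul, Real.norm_eq_abs, abs_of_nonneg hμ0]
        have hsq : ‖m k (s + 2) ω‖ ^ 2 ≤ (μ * ‖m k (s + 1) ω‖ + ‖g k (s + 1) ω‖) ^ 2 :=
          pow_le_pow_left₀ (norm_nonneg _) hnorm 2
        have key : ‖m k (s + 2) ω‖ ^ 2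
            ≤ μ * ‖m k (s + 1) ω‖ ^ 2 + ‖g k (s + 1) ω‖ ^ 2 / (1 - μ) :=
          le_trans hsq (saef_mu_sq μ _ _ hμ0 hμ1)
        have hμih : μ * ‖m k (s + 1) ω‖ ^ 2
            ≤ μ * ∑ i ∈ Finset.range (s + 1), μ ^ (s - i) * ‖g k i ω‖ ^ 2 / (1 - μ) :=
          mul_le_mul_of_nonneg_left (ih ω) hμ0
        have hsum : μ * ∑ i ∈ Finset.range (s + 1), μ ^ (s - i) * ‖g k i ω‖ ^ 2 / (1 - μ)
            = ∑ i ∈ Finset.range (s + 1), μ ^ (s + 1 - i) * ‖g k i ω‖ ^ 2 / (1 - μ) := by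
          rw [Finset.mul_sum]
          refine Finset.sum_congr rfl (fun i hi => ?_)
          have hle : i ≤ s := Nat.lt_succ_iff.mp (Finset.mem_range.mp hi)
          rw [Nat.succ_sub hle]
          have hp : μ ^ (s - i).succ = μ ^ (s - i) * μ := pow_succ μ (s - i)
          rw [hp]; ring
        have hlast : ∑ i ∈ Finset.range (s + 2), μ ^ (s + 1 - i) * ‖g k i ω‖ ^ 2 / (1 - μ)
            = (∑ i ∈ Finset.range (s + 1), μ ^ (s + 1 - i) * ‖g k i ω‖ ^ 2 / (1 - μ))
              + ‖g k (s + 1) ω‖ ^ 2 / (1 - μ) := by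
          rw [Finset.sum_range_succ, Nat.sub_self, pow_zero, one_mul]
        rw [hlast, ← hsum]
        linarith [key, hμih]
  -- geometric sum bound
  have hgeom : ∀ n : ℕ, ∑ i ∈ Finset.range n, μ ^ i ≤ 1 / (1 - μ) := by
    intro n
    calc ∑ i ∈ Finset.range n, μ ^ i = (μ ^ n - 1) / (μ - 1) := geom_sum_eq (ne_of_lt hμ1) n
      _ = (1 - μ ^ n) / (1 - μ) := by rw [← neg_div_neg_eq, neg_sub, neg_sub]
      _ ≤ 1 / (1 - μ) := by
          rw [div_le_div_iff₀ h1μ h1μ]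
          nlinarith [pow_nonneg hμ0 n]
  -- expected momentum bound
  have hmE : ∀ s, ∫ ω, ‖m k (s + 1) ω‖ ^ 2 ∂P ≤ (M ^ 2 + σ ^ 2) / (1 - μ) ^ 2 := by
    intro s
    have hterm : ∀ i ∈ Finset.range (s + 1),
        Integrable (fun ω => μ ^ (s - i) * ‖g k i ω‖ ^ 2 / (1 - μ)) P := by
      intro i _
      simpa [mul_div_assoc] using ((hgInt i).const_mul (μ ^ (s - i))).div_const (1 - μ)
    have hRint : Integrable
        (fun ω => ∑ i ∈ Finset.range (s + 1), μ ^ (s - i) * ‖g k i ω‖ ^ 2 / (1 - μ)) P :=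
      integrable_finset_sum _ hterm
    refine le_trans (integral_mono_of_nonneg (ae_of_all _ fun ω => sq_nonneg _) hRint
      (ae_of_all _ (hmpt s))) ?_
    rw [integral_finset_sum _ hterm]
    have hub : ∀ i ∈ Finset.range (s + 1),
        ∫ ω, μ ^ (s - i) * ‖g k i ω‖ ^ 2 / (1 - μ) ∂P
          ≤ μ ^ (s - i) / (1 - μ) * (M ^ 2 + σ ^ 2) := by
      intro i _
      have heq : (fun ω => μ ^ (s - i) * ‖g k i ω‖ ^ 2 / (1 - μ))
          = fun ω => (μ ^ (s - i) / (1 - μ)) * ‖g k i ω‖ ^ 2 := by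
        funext ω; ring
      rw [heq, integral_const_mul]
      exact mul_le_mul_of_nonneg_left (hgbound k i) (div_nonneg (pow_nonneg hμ0 _) h1μ.le)
    refine le_trans (Finset.sum_le_sum hub) ?_
    have heq2 : ∑ i ∈ Finset.range (s + 1), μ ^ (s - i) / (1 - μ) * (M ^ 2 + σ ^ 2)
        = (∑ i ∈ Finset.range (s + 1), μ ^ (s - i)) * ((M ^ 2 + σ ^ 2) / (1 - μ)) := by
      rw [Finset.sum_mul]
      exact Finset.sum_congr rfl (fun i _ => by ring)
    rw [heq2]
    have hrefl : ∑ i ∈ Finset.range (s + 1), μ ^ (s - i)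
        = ∑ i ∈ Finset.range (s + 1), μ ^ i := by
      have := Finset.sum_range_reflect (fun i => μ ^ i) (s + 1)
      simpa using this
    have hs1 : ∑ i ∈ Finset.range (s + 1), μ ^ (s - i) ≤ 1 / (1 - μ) := by
      rw [hrefl]; exact hgeom (s + 1)
    have h2 : (0:ℝ) ≤ (M ^ 2 + σ ^ 2) / (1 - μ) := div_nonneg hMσ h1μ.le
    calc (∑ i ∈ Finset.range (s + 1), μ ^ (s - i)) * ((M ^ 2 + σ ^ 2) / (1 - μ))
        ≤ (1 / (1 - μ)) * ((M ^ 2 + σ ^ 2) / (1 - μ)) := mul_le_mul_of_nonneg_right hs1 h2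
      _ = (M ^ 2 + σ ^ 2) / (1 - μ) ^ 2 := by
          rw [div_mul_div_comm, one_mul, ← sq]
  -- error bound pointwise
  have hept : ∀ s ω, ‖e k (s + 1) ω‖ ^ 2 ≤ (1 - δ) * ‖Δ k (s + 1) ω‖ ^ 2 := by
    intro s ω
    rw [he k s ω, norm_sub_rev]
    exact hCo (Δ k (s + 1) ω)
  -- dominating sequence
  obtain ⟨D, hD0, hDs⟩ : ∃ D : ℕ → Ω → ℝ,
      (∀ ω, D 0 ω = c * (η 0) ^ 2 * ‖m k 1 ω‖ ^ 2) ∧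
      (∀ s ω, D (s + 1) ω = ρ * D s ω + c * (η (s + 1)) ^ 2 * ‖m k (s + 2) ω‖ ^ 2) :=
    ⟨fun n => Nat.rec (fun ω => c * (η 0) ^ 2 * ‖m k 1 ω‖ ^ 2)
      (fun s Ds ω => ρ * Ds ω + c * (η (s + 1)) ^ 2 * ‖m k (s + 2) ω‖ ^ 2) n,
      fun _ => rfl, fun _ _ => rfl⟩
  have hsm : ∀ s ω, ‖η s • m k (s + 1) ω‖ ^ 2 = (η s) ^ 2 * ‖m k (s + 1) ω‖ ^ 2 := by
    intro s ω
    rw [norm_smul, Real.norm_eq_abs, mul_pow, sq_abs]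
  -- D dominates the squared norm of Δ
  have hDpt : ∀ s ω, ‖Δ k (s + 1) ω‖ ^ 2 ≤ D s ω := by
    intro s
    induction s with
    | zero =>
        intro ω
        have h : Δ k 1 ω = η 0 • m k 1 ω := by rw [hΔ k 0 ω, he0 k ω, zero_add]
        rw [h, hsm 0 ω, hD0 ω]
        nlinarith [sq_nonneg (η 0), sq_nonneg (‖m k 1 ω‖), mul_nonneg (sq_nonneg (η 0)) (sq_nonneg (‖m k 1 ω‖))]
    | succ s ih =>
        intro ω
        rw [hΔ k (s + 1) ω, hDs s ω]
        calc ‖e k (s + 1) ω + η (s + 1) • m k (s + 2) ω‖ ^ 2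
            ≤ (1 + β₁) * ‖e k (s + 1) ω‖ ^ 2
              + (1 + 1 / β₁) * ‖η (s + 1) • m k (s + 2) ω‖ ^ 2 := saef_young_sq _ _ hβ0
          _ ≤ (1 + β₁) * ((1 - δ) * ‖Δ k (s + 1) ω‖ ^ 2)
              + c * ((η (s + 1)) ^ 2 * ‖m k (s + 2) ω‖ ^ 2) := by
              rw [hsm (s + 1) ω, ← hcdef]
              have := mul_le_mul_of_nonneg_left (hept s ω) (by positivity : (0:ℝ) ≤ 1 + β₁)
              linarith
          _ ≤ ρ * D s ω + c * (η (s + 1)) ^ 2 * ‖m k (s + 2) ω‖ ^ 2 := by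
              have h1 : (1 + β₁) * ((1 - δ) * ‖Δ k (s + 1) ω‖ ^ 2) = ρ * ‖Δ k (s + 1) ω‖ ^ 2 := by
                rw [hρdef]; ring
              have h2 := mul_le_mul_of_nonneg_left (ih ω) hρ0.le
              rw [h1]; linarith [h2]
  -- D is integrable
  have hDint : ∀ s, Integrable (D s) P := by
    intro s
    induction s with
    | zero =>
        have h : D 0 = fun ω => c * (η 0) ^ 2 * ‖m k 1 ω‖ ^ 2 := funext hD0
        rw [h]
        exact (hmInt 1).const_mul _
    | succ s ih =>
        have h : D (s + 1) = fun ω => ρ * D s ω + c * (η (s + 1)) ^ 2 * ‖m k (s + 2) ω‖ ^ 2 :=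
          funext (hDs s)
        rw [h]
        exact (ih.const_mul ρ).add ((hmInt (s + 2)).const_mul _)
  -- expected bound on D
  have hηsq : ∀ s, (η s) ^ 2 ≤ ηmax ^ 2 := fun s => pow_le_pow_left₀ (hη0 s).le (hηmax s) 2
  have hmnn : ∀ s, 0 ≤ ∫ ω, ‖m k s ω‖ ^ 2 ∂P := fun s => integral_nonneg (fun ω => sq_nonneg _)
  have hstep : ∀ s, c * (η s) ^ 2 * ∫ ω, ‖m k (s + 1) ω‖ ^ 2 ∂P ≤ c * X := by
    intro s
    have hη2 : (0:ℝ) ≤ (η s) ^ 2 := sq_nonneg _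
    have hE : (0:ℝ) ≤ (M ^ 2 + σ ^ 2) / (1 - μ) ^ 2 := div_nonneg hMσ (sq_nonneg _)
    have h1 : c * (η s) ^ 2 * ∫ ω, ‖m k (s + 1) ω‖ ^ 2 ∂P
        ≤ c * (η s) ^ 2 * ((M ^ 2 + σ ^ 2) / (1 - μ) ^ 2) :=
      mul_le_mul_of_nonneg_left (hmE s) (mul_nonneg hc0.le hη2)
    have h2 : c * (η s) ^ 2 * ((M ^ 2 + σ ^ 2) / (1 - μ) ^ 2)
        ≤ c * ηmax ^ 2 * ((M ^ 2 + σ ^ 2) / (1 - μ) ^ 2) :=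
      mul_le_mul_of_nonneg_right (mul_le_mul_of_nonneg_left (hηsq s) hc0.le) hE
    have h3 : c * ηmax ^ 2 * ((M ^ 2 + σ ^ 2) / (1 - μ) ^ 2) = c * X := by
      rw [hXdef]; ring
    linarith
  have hDE : ∀ s, ∫ ω, D s ω ∂P ≤ c * X / (1 - ρ) := by
    have hcX : c * X ≤ c * X / (1 - ρ) := by
      rw [le_div_iff₀ h1ρ]
      have hnn : 0 ≤ c * X * ρ := mul_nonneg (mul_nonneg hc0.le hX0) hρ0.le
      have hexp : c * X * (1 - ρ) = c * X - c * X * ρ := by ring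
      rw [hexp]; linarith
    intro s
    induction s with
    | zero =>
        have h : D 0 = fun ω => c * (η 0) ^ 2 * ‖m k 1 ω‖ ^ 2 := funext hD0
        have hint : ∫ ω, D 0 ω ∂P = c * (η 0) ^ 2 * ∫ ω, ‖m k 1 ω‖ ^ 2 ∂P := by
          rw [h]; exact integral_const_mul _ _
        rw [hint]
        exact le_trans (hstep 0) hcX
    | succ s ih =>
        have hfun : (fun ω => D (s + 1) ω)
            = fun ω => ρ * D s ω + c * (η (s + 1)) ^ 2 * ‖m k (s + 2) ω‖ ^ 2 :=
          funext (hDs s)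
        have hint : ∫ ω, D (s + 1) ω ∂P
            = ρ * ∫ ω, D s ω ∂P + c * (η (s + 1)) ^ 2 * ∫ ω, ‖m k (s + 2) ω‖ ^ 2 ∂P := by
          rw [hfun, integral_add ((hDint s).const_mul ρ) ((hmInt (s + 2)).const_mul _),
            integral_const_mul, integral_const_mul]
        rw [hint]
        have h1 : ρ * ∫ ω, D s ω ∂P ≤ ρ * (c * X / (1 - ρ)) :=
          mul_le_mul_of_nonneg_left ih hρ0.le
        have h2 := hstep (s + 1)
        have hne : (1 - ρ) ≠ 0 := ne_of_gt h1ρ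
        have hY : c * X / (1 - ρ) * (1 - ρ) = c * X := div_mul_cancel₀ _ hne
        have hid : ρ * (c * X / (1 - ρ)) + c * X = c * X / (1 - ρ) := by
          apply mul_right_cancel₀ hne
          calc (ρ * (c * X / (1 - ρ)) + c * X) * (1 - ρ)
              = ρ * (c * X / (1 - ρ) * (1 - ρ)) + c * X * (1 - ρ) := by ring
            _ = ρ * (c * X) + c * X * (1 - ρ) := by rw [hY]
            _ = c * X := by ring
            _ = c * X / (1 - ρ) * (1 - ρ) := hY.symm
        linarith
  -- conclusion
  have hfin : ∫ ω, ‖Δ k (t + 1) ω‖ ^ 2 ∂P ≤ ∫ ω, D t ω ∂P :=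
    integral_mono_of_nonneg (ae_of_all _ fun ω => sq_nonneg _) (hDint t)
      (ae_of_all _ (hDpt t))
  rw [← hcdef, ← hρdef, ← hXdef]
  calc ∫ ω, ‖Δ k (t + 1) ω‖ ^ 2 ∂P ≤ ∫ ω, D t ω ∂P := hfin
    _ ≤ c * X / (1 - ρ) := hDE t
    _ = c / (1 - ρ) * X := by ring
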